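/- Let m = (m₁,m₂) ∈ ℕ² and let Γ^{(m)}_□ = {γ ∈ ℤ² : 0 ≤ γ₁ ≤ 2m₁, −m₂ < γ₂ ≤ m₂, γ₁+γ₂ even}. Then the system {χ^{(m)}_γ : γ ∈ Γ^{(m)}_□} is an orthogonal basis of the (2m₁+1)m₂-dimensional inner product space (L(I^{(m)}), ⟨·,·⟩_w), with norms ‖χ^{(m)}_γ‖²_w = 1 if γ₁ ∈ {0, 2m₁} and ‖χ^{(m)}_γ‖²_w = 1/2 otherwise. -/

import Mathlib

noncomputable section

/-- The rhodonea curve `ρ^{(m)}_α`. -/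
def rho (m₁ m₂ : ℕ) (α : ℝ) (t : ℝ) : ℝ × ℝ :=
  (Real.cos (m₂ * t) * Real.cos (m₁ * t - α * Real.pi),
   Real.cos (m₂ * t) * Real.sin (m₁ * t - α * Real.pi))

/-- The sampling parameters `t^{(m)}_l = l π / (2 m₁ m₂)`. -/
def tSample (m₁ m₂ : ℕ) (l : ℕ) : ℝ := l * Real.pi / (2 * m₁ * m₂)

/-- The set `S^{(m)}(t)` of parameters in `[0, 2π)` hitting the same point as `t`. -/
def Sset (m₁ m₂ : ℕ) (α t : ℝ) : Set ℝ :=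
  {s | s ∈ Set.Ico (0 : ℝ) (2 * Real.pi) ∧ rho m₁ m₂ α s = rho m₁ m₂ α t}

/-- The sample point set `LS^{(m)}_α` along the rhodonea curve. -/
def LSa (m₁ m₂ : ℕ) (α : ℝ) : Set (ℝ × ℝ) :=
  {p | ∃ l : ℕ, l < 4 * m₁ * m₂ ∧ p = rho m₁ m₂ α (tSample m₁ m₂ l)}

/-- The nodal index set `I^{(m)}` as a set. -/
def Idx (m₁ m₂ : ℕ) : Set (ℤ × ℤ) :=
  {i | 0 ≤ i.1 ∧ i.1 ≤ (m₁ : ℤ) ∧ -(2 * (m₂ : ℤ)) < i.2 ∧ i.2 ≤ 2 * (m₂ : ℤ) ∧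
       (i.1 = (m₁ : ℤ) → i.2 ≤ 0) ∧ Even (i.1 + i.2)}

/-- The nodal index set `I^{(m)}` as a finset. -/
def IdxF (m₁ m₂ : ℕ) : Finset (ℤ × ℤ) :=
  (Finset.Icc (0 : ℤ) (m₁ : ℤ) ×ˢ Finset.Ioc (-(2 * (m₂ : ℤ))) (2 * (m₂ : ℤ))).filter
    (fun i => (i.1 = (m₁ : ℤ) → i.2 ≤ 0) ∧ Even (i.1 + i.2))

/-- Radial coordinate `r^{(m₁)}_{i₁} = cos(i₁ π / (2 m₁))`. -/
def rI (m₁ : ℕ) (i₁ : ℤ) : ℝ := Real.cos (i₁ * Real.pi / (2 * m₁))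

/-- Angular coordinate `θ^{(m₂)}_{i₂} = i₂ π / (2 m₂)`. -/
def thetaI (m₂ : ℕ) (i₂ : ℤ) : ℝ := i₂ * Real.pi / (2 * m₂)

/-- The rhodonea node `x^{(m)}_i` in Cartesian coordinates. -/
def node (m₁ m₂ : ℕ) (i : ℤ × ℤ) : ℝ × ℝ :=
  (rI m₁ i.1 * Real.cos (thetaI m₂ i.2), rI m₁ i.1 * Real.sin (thetaI m₂ i.2))

/-- The rhodonea node set `LS^{(m)}`. -/
def LS (m₁ m₂ : ℕ) : Set (ℝ × ℝ) := node m₁ m₂ '' Idx m₁ m₂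

/-- Chebyshev polynomial of the first kind, `T_n(r) = cos(n arccos r)`. -/
def chebT (n : ℕ) (r : ℝ) : ℝ := Real.cos (n * Real.arccos r)

/-- The closed unit disk `𝔻 ⊆ ℝ²`. -/
def closedDisk : Set (ℝ × ℝ) := {x | x.1 ^ 2 + x.2 ^ 2 ≤ 1}

/-- The weights `w^{(m)}_i`. -/
def wgt (m₁ m₂ : ℕ) (i : ℤ × ℤ) : ℝ :=
  if i.1 = 0 then 1 / (4 * m₁ * m₂) else 2 / (4 * m₁ * m₂)

/-- The discrete basis functions `χ^{(m)}_γ(i)`. -/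
def chi (m₁ m₂ : ℕ) (γ i : ℤ × ℤ) : ℂ :=
  (Real.cos (γ.1 * i.1 * Real.pi / (2 * m₁)) : ℂ) *
    Complex.exp (Complex.I * (γ.2 * i.2 * Real.pi / (2 * m₂)))

/-- The discrete inner product `⟨f, g⟩_w` on `L(I^{(m)})`. -/
def innerW (m₁ m₂ : ℕ) (f g : ℤ × ℤ → ℂ) : ℂ :=
  ∑ i ∈ IdxF m₁ m₂, (wgt m₁ m₂ i : ℂ) * f i * (starRingEnd ℂ) (g i)

/-- The rectangular spectral index set `Γ^{(m)}_□`. -/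
def GammaSq (m₁ m₂ : ℕ) : Finset (ℤ × ℤ) :=
  (Finset.Icc (0 : ℤ) (2 * (m₁ : ℤ)) ×ˢ Finset.Ioc (-(m₂ : ℤ)) (m₂ : ℤ)).filter
    (fun γ => Even (γ.1 + γ.2))

/-- The full frequency box `K^{(m)}`. -/
def KSet (m₁ m₂ : ℕ) : Finset (ℤ × ℤ) :=
  Finset.Icc (0 : ℤ) (2 * (m₁ : ℤ)) ×ˢ Finset.Ioc (-(2 * (m₂ : ℤ))) (2 * (m₂ : ℤ))

/-- The flip (glide-reflection) operator `γ ↦ γ*` on `K^{(m)}`, with second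
coordinate `(γ₂ + 2m₂) mod 4m₂` taken in `(-2m₂, 2m₂]`. -/
def flipOp (m₁ m₂ : ℕ) (γ : ℤ × ℤ) : ℤ × ℤ :=
  (2 * (m₁ : ℤ) - γ.1, if γ.2 ≤ 0 then γ.2 + 2 * (m₂ : ℤ) else γ.2 - 2 * (m₂ : ℤ))

/-- `Γ` is a spectral index set for `I^{(m)}`: a subset of `K^{(m)}` satisfying the
parity condition whose functions `χ^{(m)}_γ` form an orthogonal basis of `L(I^{(m)})`. -/
def IsSpectral (m₁ m₂ : ℕ) (Γ : Finset (ℤ × ℤ)) : Prop :=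
  Γ ⊆ KSet m₁ m₂ ∧ (∀ γ ∈ Γ, Even (γ.1 + γ.2)) ∧
  (∀ γ ∈ Γ, ∀ γ' ∈ Γ, γ ≠ γ' → innerW m₁ m₂ (chi m₁ m₂ γ) (chi m₁ m₂ γ') = 0) ∧
  LinearIndependent ℂ (fun γ : ↥Γ => fun i : ↥(IdxF m₁ m₂) => chi m₁ m₂ γ.1 i.1) ∧
  Submodule.span ℂ
    (Set.range (fun γ : ↥Γ => fun i : ↥(IdxF m₁ m₂) => chi m₁ m₂ γ.1 i.1)) = ⊤

/-- The real discrete basis functions `χ^{(m)}_{ℛ,γ}(i)` (for `γ ∈ Γ`). -/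
def chiR (m₁ m₂ : ℕ) (Γ : Finset (ℤ × ℤ)) (γ i : ℤ × ℤ) : ℝ :=
  Real.cos (γ.1 * i.1 * Real.pi / (2 * m₁)) *
    (if ((γ.1, -γ.2) ∈ Γ ∧ 0 ≤ γ.2) ∨ ((γ.1, -γ.2) ∉ Γ ∧ γ.1 ≤ (m₁ : ℤ))
     then Real.cos (γ.2 * i.2 * Real.pi / (2 * m₂))
     else Real.sin (γ.2 * i.2 * Real.pi / (2 * m₂)))

/-- The Chebyshev–Fourier basis functions `X_γ(r, θ) = T_{γ₁}(r) e^{i γ₂ θ}`. -/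
def Xfun (γ : ℤ × ℤ) (p : ℝ × ℝ) : ℂ :=
  (Real.cos (γ.1 * Real.arccos p.1) : ℂ) * Complex.exp (Complex.I * (γ.2 * p.2))

/-- The real Chebyshev–Fourier basis functions `X_{ℛ,γ}` (for `γ ∈ Γ`). -/
def XRfun (m₁ : ℕ) (Γ : Finset (ℤ × ℤ)) (γ : ℤ × ℤ) (p : ℝ × ℝ) : ℝ :=
  Real.cos (γ.1 * Real.arccos p.1) *
    (if ((γ.1, -γ.2) ∈ Γ ∧ 0 ≤ γ.2) ∨ ((γ.1, -γ.2) ∉ Γ ∧ γ.1 ≤ (m₁ : ℤ))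
     then Real.cos (γ.2 * p.2) else Real.sin (γ.2 * p.2))

/-- The Lagrange functions `L^{(m)}_i`. -/
def Lag (m₁ m₂ : ℕ) (Γ : Finset (ℤ × ℤ)) (i : ℤ × ℤ) (p : ℝ × ℝ) : ℂ :=
  (wgt m₁ m₂ i : ℂ) *
    ∑ γ ∈ Γ, ((starRingEnd ℂ) (chi m₁ m₂ γ i) /
      innerW m₁ m₂ (chi m₁ m₂ γ) (chi m₁ m₂ γ)) * Xfun γ p

/-- The complex-valued version of `X_{ℛ,γ}`. -/
def XRc (m₁ : ℕ) (Γ : Finset (ℤ × ℤ)) (γ : ℤ × ℤ) (p : ℝ × ℝ) : ℂ :=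
  (XRfun m₁ Γ γ p : ℂ)

/-- The real Lagrange functions `L^{(m)}_{ℛ,i}`. -/
def LagR (m₁ m₂ : ℕ) (Γ : Finset (ℤ × ℤ)) (i : ℤ × ℤ) (p : ℝ × ℝ) : ℂ :=
  (wgt m₁ m₂ i : ℂ) *
    ∑ γ ∈ Γ, ((chiR m₁ m₂ Γ γ i /
        (∑ j ∈ IdxF m₁ m₂, wgt m₁ m₂ j * chiR m₁ m₂ Γ γ j ^ 2) : ℝ) : ℂ) * XRc m₁ Γ γ p

end



section AuxProof

open Finset Complex

section Helpers

lemma parity_filter (L U : ℤ) (N : ℕ) (hU : U = L + 2*N) (p : ℤ) :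
    (Finset.Ioc L U).filter (fun x => Even (p + x))
      = (Finset.range N).image (fun k : ℕ => L + 1 + (if Even (p + L) then 1 else 0) + 2*(k:ℤ)) := by
  subst hU
  ext x
  simp only [Finset.mem_filter, Finset.mem_Ioc, Finset.mem_image, Finset.mem_range]
  by_cases h : Even (p + L)
  · rw [if_pos h]
    rw [Int.even_iff] at h
    rw [Int.even_iff]
    constructor
    · rintro ⟨⟨h1, h2⟩, h3⟩
      exact ⟨((x - L)/2 - 1).toNat, by omega, by omega⟩
    · rintro ⟨k, hk, rfl⟩
      omega
  · rw [if_neg h]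
    rw [Int.not_even_iff] at h
    rw [Int.even_iff]
    constructor
    · rintro ⟨⟨h1, h2⟩, h3⟩
      exact ⟨((x - L - 1)/2).toNat, by omega, by omega⟩
    · rintro ⟨k, hk, rfl⟩
      omega

lemma parity_card (L U : ℤ) (N : ℕ) (hU : U = L + 2*N) (p : ℤ) :
    ((Finset.Ioc L U).filter (fun x => Even (p + x))).card = N := by
  rw [parity_filter L U N hU p, Finset.card_image_of_injOn, Finset.card_range]
  intro a _ b _ hab
  simp only at hab
  split_ifs at hab <;> omega

lemma parity_sum (L U : ℤ) (N : ℕ) (hU : U = L + 2*N) (p : ℤ) (f : ℤ → ℂ) :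
    ∑ x ∈ (Finset.Ioc L U).filter (fun x => Even (p + x)), f x
      = ∑ k ∈ Finset.range N, f (L + 1 + (if Even (p + L) then 1 else 0) + 2*(k:ℤ)) := by
  rw [parity_filter L U N hU p, Finset.sum_image]
  intro a _ b _ hab
  simp only at hab
  split_ifs at hab <;> omega

lemma Icc_int_sum (n : ℕ) (f : ℤ → ℂ) :
    ∑ x ∈ Finset.Icc (0:ℤ) n, f x = ∑ k ∈ Finset.range (n+1), f k := by
  rw [show Finset.Icc (0:ℤ) n = (Finset.range (n+1)).image (fun k : ℕ => (k:ℤ)) from ?_,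
    Finset.sum_image (fun a _ b _ h => by omega)]
  ext x
  simp only [Finset.mem_Icc, Finset.mem_image, Finset.mem_range]
  constructor
  · rintro ⟨h1, h2⟩
    exact ⟨x.toNat, by omega, by omega⟩
  · rintro ⟨k, hk, rfl⟩
    omega

end Helpers


section ExpHelpers

lemma exp_sum_zero (N : ℕ) (g : ℕ → ℝ) (b θ : ℝ) (hg : ∀ k, g k = b + θ * k)
    (hz1 : Complex.exp (Complex.I * (θ:ℂ)) ≠ 1)
    (hzN : Complex.exp (Complex.I * (θ:ℂ)) ^ N = 1) :
    ∑ k ∈ Finset.range N, Complex.exp (Complex.I * ((g k : ℝ) : ℂ)) = 0 := by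
  have key : ∀ k ∈ Finset.range N,
      Complex.exp (Complex.I * ((g k : ℝ) : ℂ))
        = Complex.exp (Complex.I * (b:ℂ)) * (Complex.exp (Complex.I * (θ:ℂ)))^k := by
    intro k _
    rw [← Complex.exp_nat_mul, ← Complex.exp_add, hg k]
    congr 1
    push_cast
    ring
  rw [Finset.sum_congr rfl key, ← Finset.mul_sum, geom_sum_eq hz1, hzN]
  simp

lemma exp_ne_one (m₂ : ℕ) (hm₂ : 0 < m₂) (β : ℤ) (hβ : β ≠ 0)
    (h1 : -(2*(m₂:ℤ)) < β) (h2 : β < 2*(m₂:ℤ)) :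
    Complex.exp (Complex.I * ((β * Real.pi / m₂ : ℝ) : ℂ)) ≠ 1 := by
  intro h
  rw [Complex.exp_eq_one_iff] at h
  obtain ⟨n, hn⟩ := h
  have him := congrArg Complex.im hn
  simp [Complex.mul_im, Complex.mul_re] at him
  -- him : β * π / m₂ = n * 2π  (roughly)
  have hm : (m₂:ℝ) ≠ 0 := Nat.cast_ne_zero.mpr hm₂.ne'
  have hβeq : (β:ℝ) = 2*n*m₂ := by
    have hπ := Real.pi_ne_zero
    field_simp at him
    apply mul_right_cancel₀ hπ
    linear_combination Real.pi * him
  have hβeq' : β = 2*n*m₂ := by exact_mod_cast hβeq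
  have hd : (2*(m₂:ℤ)) ∣ β := ⟨n, by rw [hβeq']; ring⟩
  have := Int.le_of_dvd (abs_pos.mpr hβ) ((dvd_abs _ _).mpr hd)
  rcases abs_cases β with ⟨h3, _⟩ | ⟨h3, _⟩ <;> omega

lemma exp_pow_2m (m₂ : ℕ) (hm₂ : 0 < m₂) (β : ℤ) :
    (Complex.exp (Complex.I * ((β * Real.pi / m₂ : ℝ) : ℂ))) ^ (2*m₂) = 1 := by
  have hm : (m₂:ℂ) ≠ 0 := Nat.cast_ne_zero.mpr hm₂.ne'
  rw [← Complex.exp_nat_mul, Complex.exp_eq_one_iff]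
  refine ⟨β, ?_⟩
  push_cast
  field_simp

lemma exp_pow_m (m₂ : ℕ) (hm₂ : 0 < m₂) (β : ℤ) (hβ : Even β) :
    (Complex.exp (Complex.I * ((β * Real.pi / m₂ : ℝ) : ℂ))) ^ m₂ = 1 := by
  obtain ⟨c, hc⟩ := hβ
  have hm : (m₂:ℂ) ≠ 0 := Nat.cast_ne_zero.mpr hm₂.ne'
  rw [← Complex.exp_nat_mul, Complex.exp_eq_one_iff]
  refine ⟨c, ?_⟩
  subst hc
  push_cast
  field_simp
  ring

lemma cos_odd_half (a : ℤ) (ha : ¬ Even a) : Real.cos (a * Real.pi / 2) = 0 := by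
  obtain ⟨c, hc⟩ := Int.not_even_iff_odd.mp ha
  rw [show ((a:ℝ) * Real.pi / 2) = c * Real.pi + Real.pi/2 by rw [hc]; push_cast; ring]
  rw [Real.cos_add, Real.cos_pi_div_two, Real.sin_pi_div_two, Real.sin_int_mul_pi]
  ring

end ExpHelpers


lemma S_split (m₁ : ℕ) (hm₁ : 0 < m₁) (u : ℂ) :
    ∑ k ∈ Finset.range (m₁+1), (if k = 0 ∨ k = m₁ then (1:ℂ) else 2) * u^k
      = 2 * (∑ k ∈ Finset.range (m₁+1), u^k) - 1 - u^m₁ := by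
  have h1 : ∀ k ∈ Finset.range (m₁+1),
      (if k = 0 ∨ k = m₁ then (1:ℂ) else 2) * u^k
        = 2*u^k - (if k = 0 ∨ k = m₁ then u^k else 0) := by
    intro k _
    split_ifs <;> ring
  rw [Finset.sum_congr rfl h1, Finset.sum_sub_distrib, ← Finset.mul_sum,
    ← Finset.sum_filter]
  have h2 : (Finset.range (m₁+1)).filter (fun k => k = 0 ∨ k = m₁) = {0, m₁} := by
    ext k
    simp only [Finset.mem_filter, Finset.mem_range, Finset.mem_insert, Finset.mem_singleton]
    omega
  rw [h2, Finset.sum_pair hm₁.ne, pow_zero]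
  ring

lemma cheb_sum (m₁ : ℕ) (hm₁ : 0 < m₁) (n : ℤ) (hn : Even n) :
    ∑ k ∈ Finset.range (m₁+1),
        (if k = 0 ∨ k = m₁ then (1:ℂ) else 2) *
          ((Real.cos ((n * k * Real.pi / (2*m₁) : ℝ)) : ℝ) : ℂ)
      = if (4*(m₁:ℤ)) ∣ n then (2*(m₁:ℕ) : ℂ) else 0 := by
  have hm : (m₁:ℝ) ≠ 0 := Nat.cast_ne_zero.mpr hm₁.ne'
  have hmc : (m₁:ℂ) ≠ 0 := Nat.cast_ne_zero.mpr hm₁.ne'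
  by_cases hd : (4*(m₁:ℤ)) ∣ n
  · obtain ⟨c, hc⟩ := hd
    have hcos : ∀ k ∈ Finset.range (m₁+1),
        (if k = 0 ∨ k = m₁ then (1:ℂ) else 2) *
          ((Real.cos ((n * k * Real.pi / (2*m₁) : ℝ)) : ℝ) : ℂ)
        = (if k = 0 ∨ k = m₁ then (1:ℂ) else 2) * (1:ℂ)^k := by
      intro k _
      congr 1
      rw [show ((n:ℝ) * k * Real.pi / (2*m₁)) = (c*k : ℤ) * (2*Real.pi) by
        rw [hc]; push_cast; field_simp; ring]
      rw [Real.cos_int_mul_two_pi]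
      simp
    rw [Finset.sum_congr rfl hcos, S_split m₁ hm₁ 1, if_pos ⟨c, hc⟩]
    simp
    push_cast
    ring
  · set ω := Complex.exp (Complex.I * ((n * Real.pi / (2*m₁) : ℝ) : ℂ)) with hω
    set ν := Complex.exp (Complex.I * ((-n * Real.pi / (2*m₁) : ℝ) : ℂ)) with hν
    have hων : ω * ν = 1 := by
      rw [hω, hν, ← Complex.exp_add, ← Complex.exp_zero]
      congr 1
      push_cast
      ring
    have hexp_one : ∀ β : ℤ, (4*(m₁:ℤ)) ∣ β →
        Complex.exp (Complex.I * ((β * Real.pi / (2*m₁) : ℝ) : ℂ)) = 1 := by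
      intro β ⟨c, hc⟩
      rw [Complex.exp_eq_one_iff]
      refine ⟨c, ?_⟩
      rw [hc]
      push_cast
      field_simp [hmc]
      ring
    have hone_exp : ∀ β : ℤ,
        Complex.exp (Complex.I * ((β * Real.pi / (2*m₁) : ℝ) : ℂ)) = 1 → (4*(m₁:ℤ)) ∣ β := by
      intro β h
      rw [Complex.exp_eq_one_iff] at h
      obtain ⟨j, hj⟩ := h
      have him := congrArg Complex.im hj
      simp only [Complex.mul_im, Complex.I_re, Complex.I_im, Complex.ofReal_re, Complex.ofReal_im,
        Complex.intCast_re, Complex.intCast_im, one_mul, zero_mul, add_zero, zero_add, mul_zero,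
        mul_one] at him
      have hβeq : (β:ℝ) = 4*m₁*j := by
        have hπ := Real.pi_ne_zero
        field_simp [hm] at him
        have h2π : ((2:ℂ) * (Real.pi:ℂ)).re = 2 * Real.pi := by simp
        apply mul_right_cancel₀ hπ
        linear_combination him + 2 * (m₁:ℝ) * (j:ℝ) * h2π
      exact ⟨j, by exact_mod_cast hβeq⟩
    have hω1 : ω ≠ 1 := fun h => hd (hone_exp n h)
    have hν1 : ν ≠ 1 := by
      intro h
      refine hd ((dvd_neg).mp (hone_exp (-n) ?_))
      rw [show ((((-n : ℤ)):ℝ) * Real.pi / (2*(m₁:ℝ)) : ℝ) = (-(n:ℝ) * Real.pi / (2*m₁) : ℝ) by push_cast; ring]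
      exact h
    have hωpow : ∀ k : ℕ, ω^k = Complex.exp (Complex.I * ((n * k * Real.pi / (2*m₁) : ℝ) : ℂ)) := by
      intro k
      rw [hω, ← Complex.exp_nat_mul]
      congr 1
      push_cast
      ring
    have hνpow : ∀ k : ℕ, ν^k = Complex.exp (Complex.I * ((-(n * k * Real.pi / (2*m₁)) : ℝ) : ℂ)) := by
      intro k
      rw [hν, ← Complex.exp_nat_mul]
      congr 1
      push_cast
      ring
    have hcos : ∀ k ∈ Finset.range (m₁+1),
        (if k = 0 ∨ k = m₁ then (1:ℂ) else 2) *
          ((Real.cos ((n * k * Real.pi / (2*m₁) : ℝ)) : ℝ) : ℂ)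
        = ((if k = 0 ∨ k = m₁ then (1:ℂ) else 2) * ω^k
          + (if k = 0 ∨ k = m₁ then (1:ℂ) else 2) * ν^k) / 2 := by
      intro k _
      rw [Complex.ofReal_cos, Complex.cos, hωpow, hνpow]
      have harg : ((n * k * Real.pi / (2*m₁) : ℝ) : ℂ) * Complex.I
          = Complex.I * ((n * k * Real.pi / (2*m₁) : ℝ) : ℂ) := by ring
      rw [harg]
      rw [show (-(((n * k * Real.pi / (2*m₁) : ℝ)) : ℂ)) * Complex.I
          = Complex.I * ((-(n * k * Real.pi / (2*m₁)) : ℝ) : ℂ) by push_cast; ring]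
      ring
    rw [Finset.sum_congr rfl hcos, if_neg hd]
    rw [← Finset.sum_div, Finset.sum_add_distrib, S_split m₁ hm₁ ω, S_split m₁ hm₁ ν]
    rw [geom_sum_eq hω1, geom_sum_eq hν1]
    -- algebra
    have hu : ω^m₁ * ν^m₁ = 1 := by rw [← mul_pow, hων, one_pow]
    have hu2 : ω^m₁ * ω^m₁ = 1 := by
      rw [← pow_add, hωpow]
      obtain ⟨c, hc⟩ := hn
      rw [Complex.exp_eq_one_iff]
      refine ⟨c, ?_⟩
      rw [hc]
      push_cast
      field_simp [hmc]
      ring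
    have hvu : ν^m₁ = ω^m₁ := by linear_combination (ω^m₁)*hu - (ν^m₁)*hu2
    have hωsucc : ω^(m₁+1) = ω^m₁ * ω := by ring
    have hνsucc : ν^(m₁+1) = ν^m₁ * ν := by ring
    rw [hωsucc, hνsucc, hvu]
    have hωne : ω - 1 ≠ 0 := sub_ne_zero.mpr hω1
    have hνne : ν - 1 ≠ 0 := sub_ne_zero.mpr hν1
    have hω0 : ω ≠ 0 := Complex.exp_ne_zero _
    have hνeq : ν = ω⁻¹ := (inv_eq_of_mul_eq_one_right hων).symm
    rw [hνeq] at hνne ⊢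
    have h1ω : (1:ℂ) - ω ≠ 0 := fun h => hωne (by linear_combination -h)
    have h1 : (ω^m₁ * ω⁻¹ - 1)/(ω⁻¹ - 1) = (ω^m₁ - ω)/(1 - ω) := by
      rw [div_eq_div_iff hνne h1ω]
      field_simp
      try ring
    rw [h1]
    field_simp
    try ring


section Structure

lemma sum_IdxF (m₁ m₂ : ℕ) {M : Type*} [AddCommMonoid M] (F : ℤ × ℤ → M) :
    ∑ i ∈ IdxF m₁ m₂, F i
      = ∑ i₁ ∈ Finset.Icc (0:ℤ) (m₁:ℤ),
          ∑ i₂ ∈ (Finset.Ioc (-(2*(m₂:ℤ))) (2*(m₂:ℤ))).filter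
            (fun i₂ => (i₁ = (m₁:ℤ) → i₂ ≤ 0) ∧ Even (i₁ + i₂)), F (i₁, i₂) := by
  rw [IdxF, Finset.sum_filter, Finset.sum_product]
  exact Finset.sum_congr rfl fun i₁ _ => (Finset.sum_filter _ _).symm

lemma filter_ne (m₁ m₂ : ℕ) (i₁ : ℤ) (h : i₁ ≠ (m₁:ℤ)) :
    (Finset.Ioc (-(2*(m₂:ℤ))) (2*(m₂:ℤ))).filter
        (fun i₂ => (i₁ = (m₁:ℤ) → i₂ ≤ 0) ∧ Even (i₁ + i₂))
      = (Finset.Ioc (-(2*(m₂:ℤ))) (2*(m₂:ℤ))).filter (fun i₂ => Even (i₁ + i₂)) :=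
  Finset.filter_congr (fun x _ => by simp [h])

lemma filter_eq (m₁ m₂ : ℕ) :
    (Finset.Ioc (-(2*(m₂:ℤ))) (2*(m₂:ℤ))).filter
        (fun i₂ => ((m₁:ℤ) = (m₁:ℤ) → i₂ ≤ 0) ∧ Even ((m₁:ℤ) + i₂))
      = (Finset.Ioc (-(2*(m₂:ℤ))) 0).filter (fun i₂ => Even ((m₁:ℤ) + i₂)) := by
  ext x
  simp only [Finset.mem_filter, Finset.mem_Ioc, Int.even_iff, forall_const]
  omega

lemma card_IdxF (m₁ m₂ : ℕ) (hm₁ : 0 < m₁) (hm₂ : 0 < m₂) :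
    (IdxF m₁ m₂).card = (2 * m₁ + 1) * m₂ := by
  have h := sum_IdxF m₁ m₂ (fun _ => (1:ℕ))
  rw [Finset.card_eq_sum_ones, h]
  have hstep : ∀ i₁ ∈ Finset.Icc (0:ℤ) (m₁:ℤ),
      (∑ i₂ ∈ (Finset.Ioc (-(2*(m₂:ℤ))) (2*(m₂:ℤ))).filter
          (fun i₂ => (i₁ = (m₁:ℤ) → i₂ ≤ 0) ∧ Even (i₁ + i₂)), 1)
        = if i₁ = (m₁:ℤ) then m₂ else 2*m₂ := by
    intro i₁ _
    rw [Finset.sum_const, smul_eq_mul, mul_one]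
    by_cases h1 : i₁ = (m₁:ℤ)
    · subst h1
      rw [filter_eq m₁ m₂, parity_card _ _ m₂ (by push_cast; ring) _, if_pos rfl]
    · rw [filter_ne m₁ m₂ i₁ h1, parity_card _ _ (2*m₂) (by push_cast; ring) _, if_neg h1]
  rw [Finset.sum_congr rfl hstep]
  rw [← Finset.add_sum_erase _ _ (show (m₁:ℤ) ∈ Finset.Icc (0:ℤ) (m₁:ℤ) by simp)]
  rw [if_pos rfl]
  have herase : ∀ i₁ ∈ (Finset.Icc (0:ℤ) (m₁:ℤ)).erase (m₁:ℤ),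
      (if i₁ = (m₁:ℤ) then m₂ else 2*m₂) = 2*m₂ := by
    intro i₁ hi₁
    rw [if_neg (Finset.ne_of_mem_erase hi₁)]
  rw [Finset.sum_congr rfl herase, Finset.sum_const, smul_eq_mul]
  have hcard : ((Finset.Icc (0:ℤ) (m₁:ℤ)).erase (m₁:ℤ)).card = m₁ := by
    rw [Finset.card_erase_of_mem (by simp), Int.card_Icc]
    simp
  rw [hcard]
  ring

lemma card_GammaSq (m₁ m₂ : ℕ) (hm₁ : 0 < m₁) (hm₂ : 0 < m₂) :
    (GammaSq m₁ m₂).card = (2 * m₁ + 1) * m₂ := by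
  rw [GammaSq, Finset.card_eq_sum_ones, Finset.sum_filter, Finset.sum_product]
  have hstep : ∀ γ₁ ∈ Finset.Icc (0:ℤ) (2*(m₁:ℤ)),
      (∑ γ₂ ∈ Finset.Ioc (-(m₂:ℤ)) (m₂:ℤ), if Even (γ₁ + γ₂) then 1 else 0) = m₂ := by
    intro γ₁ _
    rw [← Finset.sum_filter, ← Finset.card_eq_sum_ones]
    exact parity_card _ _ m₂ (by push_cast; ring) _
  rw [Finset.sum_congr rfl hstep, Finset.sum_const, smul_eq_mul, Int.card_Icc]
  simp
  omega

end Structure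


lemma summand_eq (m₁ m₂ : ℕ) (γ γ' i : ℤ × ℤ) :
    (wgt m₁ m₂ i : ℂ) * chi m₁ m₂ γ i * (starRingEnd ℂ) (chi m₁ m₂ γ' i)
      = ((wgt m₁ m₂ i * Real.cos (γ.1 * i.1 * Real.pi/(2*m₁))
            * Real.cos (γ'.1 * i.1 * Real.pi/(2*m₁)) : ℝ) : ℂ)
          * Complex.exp (Complex.I * (((γ.2 - γ'.2 : ℤ) * i.2 * Real.pi/(2*m₂) : ℝ) : ℂ)) := by
  have he : Complex.exp (Complex.I * ((γ.2:ℂ) * i.2 * Real.pi/(2*m₂)))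
      * Complex.exp (-Complex.I * ((γ'.2:ℂ) * i.2 * Real.pi/(2*m₂)))
      = Complex.exp (Complex.I * (((γ.2:ℂ) - γ'.2) * i.2 * Real.pi/(2*m₂))) := by
    rw [← Complex.exp_add]
    congr 1
    ring
  rw [chi, chi]
  simp only [map_mul, map_div₀, Complex.conj_ofReal, ← Complex.exp_conj, Complex.conj_I,
    map_intCast, map_natCast, map_ofNat, Complex.ofReal_mul, Complex.ofReal_div,
    Complex.ofReal_intCast, Complex.ofReal_natCast, Complex.ofReal_ofNat, Int.cast_sub, Complex.ofReal_sub]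
  linear_combination ((wgt m₁ m₂ i : ℂ) * (Real.cos ((γ.1:ℝ) * i.1 * Real.pi/(2*m₁)) : ℂ)
      * (Real.cos ((γ'.1:ℝ) * i.1 * Real.pi/(2*m₁)) : ℂ)) * he


set_option maxHeartbeats 1000000 in
lemma innerW_eval (m₁ m₂ : ℕ) (hm₁ : 0 < m₁) (hm₂ : 0 < m₂) (γ γ' : ℤ × ℤ)
    (hγ : γ ∈ GammaSq m₁ m₂) (hγ' : γ' ∈ GammaSq m₁ m₂) :
    innerW m₁ m₂ (chi m₁ m₂ γ) (chi m₁ m₂ γ') =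
      if γ.2 = γ'.2 then
        ((if (4*(m₁:ℤ)) ∣ (γ.1 + γ'.1) then (1:ℂ) else 0)
          + (if (4*(m₁:ℤ)) ∣ (γ.1 - γ'.1) then (1:ℂ) else 0)) / 2
      else 0 := by
  simp only [GammaSq, Finset.mem_filter, Finset.mem_product, Finset.mem_Icc, Finset.mem_Ioc]
    at hγ hγ'
  obtain ⟨⟨⟨hγ1a, hγ1b⟩, hγ2a, hγ2b⟩, hγe⟩ := hγ
  obtain ⟨⟨⟨hγ'1a, hγ'1b⟩, hγ'2a, hγ'2b⟩, hγ'e⟩ := hγ'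
  have hm1r : (m₁:ℝ) ≠ 0 := Nat.cast_ne_zero.mpr hm₁.ne'
  have hm2r : (m₂:ℝ) ≠ 0 := Nat.cast_ne_zero.mpr hm₂.ne'
  have hm1c : (m₁:ℂ) ≠ 0 := Nat.cast_ne_zero.mpr hm₁.ne'
  have hm2c : (m₂:ℂ) ≠ 0 := Nat.cast_ne_zero.mpr hm₂.ne'
  have hw : ∀ i₁ i₂ : ℤ, wgt m₁ m₂ (i₁, i₂)
      = if i₁ = 0 then (1:ℝ)/(4*m₁*m₂) else (2:ℝ)/(4*m₁*m₂) := fun _ _ => rfl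
  rw [innerW, Finset.sum_congr rfl (fun i _ => summand_eq m₁ m₂ γ γ' i), sum_IdxF]
  simp only [hw]
  by_cases hcase : γ.2 = γ'.2
  · rw [if_pos hcase]
    have hsub : γ.2 - γ'.2 = 0 := sub_eq_zero_of_eq hcase
    have hone : ∀ i₂ : ℤ, Complex.exp (Complex.I *
        ((((γ.2 - γ'.2 : ℤ):ℝ) * (i₂:ℝ) * Real.pi/(2*(m₂:ℝ)) : ℝ) : ℂ)) = 1 := by
      intro i₂
      rw [hsub]
      simp
    simp only [hone, mul_one]
    have hstep : ∀ i₁ ∈ Finset.Icc (0:ℤ) (m₁:ℤ),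
        (∑ _i₂ ∈ (Finset.Ioc (-(2*(m₂:ℤ))) (2*(m₂:ℤ))).filter
            (fun i₂ => (i₁ = (m₁:ℤ) → i₂ ≤ 0) ∧ Even (i₁ + i₂)),
          (((if i₁ = 0 then (1:ℝ)/(4*(m₁:ℝ)*(m₂:ℝ)) else (2:ℝ)/(4*(m₁:ℝ)*(m₂:ℝ)))
            * Real.cos ((γ.1:ℝ) * (i₁:ℝ) * Real.pi / (2*(m₁:ℝ)))
            * Real.cos ((γ'.1:ℝ) * (i₁:ℝ) * Real.pi / (2*(m₁:ℝ))) : ℝ) : ℂ))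
        = (((if i₁ = (m₁:ℤ) then m₂ else 2*m₂ : ℕ)) : ℂ)
            * (((if i₁ = 0 then (1:ℝ)/(4*(m₁:ℝ)*(m₂:ℝ)) else (2:ℝ)/(4*(m₁:ℝ)*(m₂:ℝ)))
              * Real.cos ((γ.1:ℝ) * (i₁:ℝ) * Real.pi / (2*(m₁:ℝ)))
              * Real.cos ((γ'.1:ℝ) * (i₁:ℝ) * Real.pi / (2*(m₁:ℝ))) : ℝ) : ℂ) := by
      intro i₁ _
      rw [Finset.sum_const, nsmul_eq_mul]
      congr 1
      by_cases h1 : i₁ = (m₁:ℤ)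
      · subst h1
        rw [filter_eq m₁ m₂, parity_card _ _ m₂ (by push_cast; ring) _, if_pos rfl]
      · rw [filter_ne m₁ m₂ i₁ h1, parity_card _ _ (2*m₂) (by push_cast; ring) _, if_neg h1]
    rw [Finset.sum_congr rfl hstep, Icc_int_sum]
    have hev1 : Even (γ.1 + γ'.1) := by
      rw [Int.even_iff] at hγe hγ'e ⊢
      omega
    have hev2 : Even (γ.1 - γ'.1) := by
      rw [Int.even_iff] at hγe hγ'e ⊢
      omega
    have hterm : ∀ k ∈ Finset.range (m₁+1),
        ((((if (k:ℤ) = (m₁:ℤ) then m₂ else 2*m₂ : ℕ)) : ℂ)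
            * (((if (k:ℤ) = 0 then (1:ℝ)/(4*(m₁:ℝ)*(m₂:ℝ)) else (2:ℝ)/(4*(m₁:ℝ)*(m₂:ℝ)))
              * Real.cos ((γ.1:ℝ) * (((k:ℤ)):ℝ) * Real.pi / (2*(m₁:ℝ)))
              * Real.cos ((γ'.1:ℝ) * (((k:ℤ)):ℝ) * Real.pi / (2*(m₁:ℝ))) : ℝ) : ℂ))
        = ((if k = 0 ∨ k = m₁ then (1:ℂ) else 2)
              * ((Real.cos ((((γ.1+γ'.1 : ℤ)):ℝ) * (k:ℝ) * Real.pi / (2*(m₁:ℝ))) : ℝ) : ℂ)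
            + (if k = 0 ∨ k = m₁ then (1:ℂ) else 2)
              * ((Real.cos ((((γ.1-γ'.1 : ℤ)):ℝ) * (k:ℝ) * Real.pi / (2*(m₁:ℝ))) : ℝ) : ℂ))
            / (4*(m₁:ℂ)) := by
      intro k hk
      have h0m : ¬ (0 : ℕ) = m₁ := by omega
      have hm0 : ¬ m₁ = 0 := by omega
      have hcc : (Real.cos ((γ.1:ℝ) * (((k:ℤ)):ℝ) * Real.pi / (2*(m₁:ℝ)))
            * Real.cos ((γ'.1:ℝ) * (((k:ℤ)):ℝ) * Real.pi / (2*(m₁:ℝ))) : ℝ)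
          = (Real.cos ((((γ.1+γ'.1 : ℤ)):ℝ) * (k:ℝ) * Real.pi / (2*(m₁:ℝ)))
            + Real.cos ((((γ.1-γ'.1 : ℤ)):ℝ) * (k:ℝ) * Real.pi / (2*(m₁:ℝ))))/2 := by
        rw [show ((((γ.1+γ'.1 : ℤ)):ℝ) * (k:ℝ) * Real.pi / (2*(m₁:ℝ)))
            = (γ.1:ℝ) * (((k:ℤ)):ℝ) * Real.pi / (2*(m₁:ℝ))
              + (γ'.1:ℝ) * (((k:ℤ)):ℝ) * Real.pi / (2*(m₁:ℝ)) by push_cast; ring,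
          show ((((γ.1-γ'.1 : ℤ)):ℝ) * (k:ℝ) * Real.pi / (2*(m₁:ℝ)))
            = (γ.1:ℝ) * (((k:ℤ)):ℝ) * Real.pi / (2*(m₁:ℝ))
              - (γ'.1:ℝ) * (((k:ℤ)):ℝ) * Real.pi / (2*(m₁:ℝ)) by push_cast; ring,
          Real.cos_add, Real.cos_sub]
        ring
      rw [show ((if (k:ℤ) = 0 then (1:ℝ)/(4*(m₁:ℝ)*(m₂:ℝ)) else (2:ℝ)/(4*(m₁:ℝ)*(m₂:ℝ)))
              * Real.cos ((γ.1:ℝ) * (((k:ℤ)):ℝ) * Real.pi / (2*(m₁:ℝ)))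
              * Real.cos ((γ'.1:ℝ) * (((k:ℤ)):ℝ) * Real.pi / (2*(m₁:ℝ))) : ℝ)
          = ((if (k:ℤ) = 0 then (1:ℝ)/(4*(m₁:ℝ)*(m₂:ℝ)) else (2:ℝ)/(4*(m₁:ℝ)*(m₂:ℝ)))
              * ((Real.cos ((((γ.1+γ'.1 : ℤ)):ℝ) * (k:ℝ) * Real.pi / (2*(m₁:ℝ)))
                + Real.cos ((((γ.1-γ'.1 : ℤ)):ℝ) * (k:ℝ) * Real.pi / (2*(m₁:ℝ))))/2) : ℝ)
        from by rw [mul_assoc, hcc]]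
      simp only [Nat.cast_inj, Nat.cast_eq_zero]
      by_cases hk0 : k = 0 <;> by_cases hkm : k = m₁
      · exact absurd (hk0 ▸ hkm) (by omega)
      · simp only [hk0, if_pos, if_true, eq_self_iff_true, true_or, if_neg h0m]
        push_cast [-Complex.ofReal_cos]
        field_simp [hm1c, hm2c]
      · simp only [hkm, if_pos rfl, or_true, if_true, if_neg hm0]
        push_cast [-Complex.ofReal_cos]
        field_simp [hm1c, hm2c]
      · simp only [if_neg hk0, if_neg hkm,
          if_neg (show ¬(k = 0 ∨ k = m₁) from by tauto)]
        push_cast [-Complex.ofReal_cos]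
        field_simp [hm1c, hm2c]
    rw [Finset.sum_congr rfl hterm, ← Finset.sum_div, Finset.sum_add_distrib,
      cheb_sum m₁ hm₁ (γ.1+γ'.1) hev1, cheb_sum m₁ hm₁ (γ.1-γ'.1) hev2]
    split_ifs <;> push_cast <;> field_simp [hm1c] <;> ring
  · rw [if_neg hcase]
    apply Finset.sum_eq_zero
    intro i₁ hi₁
    have hβ0 : γ.2 - γ'.2 ≠ 0 := sub_ne_zero_of_ne hcase
    have hβlo : -(2*(m₂:ℤ)) < γ.2 - γ'.2 := by omega
    have hβhi : γ.2 - γ'.2 < 2*(m₂:ℤ) := by omega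
    by_cases h1 : i₁ = (m₁:ℤ)
    · subst h1
      by_cases hpar : Even (γ.2 - γ'.2)
      · rw [← Finset.mul_sum, filter_eq m₁ m₂,
          parity_sum _ _ m₂ (by push_cast; ring) _]
        refine mul_eq_zero_of_right _ ?_
        set c : ℤ := (if Even ((m₁:ℤ) + -(2*(m₂:ℤ))) then 1 else 0) with hc
        refine exp_sum_zero m₂ _
          (((γ.2 - γ'.2 : ℤ):ℝ) * ((-(2*(m₂:ℤ)) + 1 + c : ℤ):ℝ) * Real.pi/(2*m₂))
          (((γ.2 - γ'.2 : ℤ):ℝ) * Real.pi/m₂) (fun k => ?_)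
          (exp_ne_one m₂ hm₂ _ hβ0 hβlo hβhi) (exp_pow_m m₂ hm₂ _ hpar)
        push_cast
        field_simp
      · have hodd : ¬ Even γ.1 ∨ ¬ Even γ'.1 := by
          rw [Int.even_iff] at hγe hγ'e hpar
          rw [Int.even_iff, Int.even_iff]
          omega
        have hcos0 : Real.cos ((γ.1:ℝ) * (((m₁:ℕ):ℤ):ℝ) * Real.pi/(2*m₁))
            * Real.cos ((γ'.1:ℝ) * (((m₁:ℕ):ℤ):ℝ) * Real.pi/(2*m₁)) = 0 := by
          rcases hodd with h | h
          · rw [show ((γ.1:ℝ)) * (((m₁:ℕ):ℤ):ℝ) * Real.pi/(2*(m₁:ℝ)) = γ.1 * Real.pi/2 by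
              push_cast; field_simp]
            rw [cos_odd_half γ.1 h, zero_mul]
          · rw [show ((γ'.1:ℝ)) * (((m₁:ℕ):ℤ):ℝ) * Real.pi/(2*(m₁:ℝ)) = γ'.1 * Real.pi/2 by
              push_cast; field_simp]
            rw [cos_odd_half γ'.1 h, mul_zero]
        apply Finset.sum_eq_zero
        intro i₂ _
        rw [mul_assoc, hcos0, mul_zero]
        simp
    · rw [← Finset.mul_sum, filter_ne m₁ m₂ i₁ h1,
        parity_sum _ _ (2*m₂) (by push_cast; ring) _]
      refine mul_eq_zero_of_right _ ?_
      set c : ℤ := (if Even (i₁ + -(2*(m₂:ℤ))) then 1 else 0) with hc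
      refine exp_sum_zero (2*m₂) _
        (((γ.2 - γ'.2 : ℤ):ℝ) * ((-(2*(m₂:ℤ)) + 1 + c : ℤ):ℝ) * Real.pi/(2*m₂))
        (((γ.2 - γ'.2 : ℤ):ℝ) * Real.pi/m₂) (fun k => ?_)
        (exp_ne_one m₂ hm₂ _ hβ0 hβlo hβhi) (exp_pow_2m m₂ hm₂ _)
      push_cast
      field_simp


section Derive

variable (m₁ m₂ : ℕ)

lemma dvd_bound_sum (m₁ : ℕ) (hm₁ : 0 < m₁) (a b : ℤ) (ha1 : 0 ≤ a) (ha2 : a ≤ 2*(m₁:ℤ))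
    (hb1 : 0 ≤ b) (hb2 : b ≤ 2*(m₁:ℤ)) (hne : a ≠ b) : ¬ (4*(m₁:ℤ)) ∣ (a + b) := by
  rintro ⟨c, hc⟩
  have hm : (0:ℤ) < (m₁:ℤ) := by exact_mod_cast hm₁
  have hc0 : 0 ≤ c := by nlinarith
  have hc1 : c ≤ 1 := by nlinarith
  interval_cases c <;> omega

lemma dvd_bound_sub (m₁ : ℕ) (hm₁ : 0 < m₁) (a b : ℤ) (ha1 : 0 ≤ a) (ha2 : a ≤ 2*(m₁:ℤ))
    (hb1 : 0 ≤ b) (hb2 : b ≤ 2*(m₁:ℤ)) (hne : a ≠ b) : ¬ (4*(m₁:ℤ)) ∣ (a - b) := by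
  rintro ⟨c, hc⟩
  have hm : (0:ℤ) < (m₁:ℤ) := by exact_mod_cast hm₁
  have hc0 : -1 ≤ c := by nlinarith
  have hc1 : c ≤ 1 := by nlinarith
  interval_cases c <;> omega

lemma ortho (hm₁ : 0 < m₁) (hm₂ : 0 < m₂) :
    ∀ γ ∈ GammaSq m₁ m₂, ∀ γ' ∈ GammaSq m₁ m₂, γ ≠ γ' →
      innerW m₁ m₂ (chi m₁ m₂ γ) (chi m₁ m₂ γ') = 0 := by
  intro γ hγ γ' hγ' hne
  rw [innerW_eval m₁ m₂ hm₁ hm₂ γ γ' hγ hγ']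
  by_cases hc : γ.2 = γ'.2
  · rw [if_pos hc]
    have hb := hγ
    have hb' := hγ'
    simp only [GammaSq, Finset.mem_filter, Finset.mem_product, Finset.mem_Icc,
      Finset.mem_Ioc] at hb hb'
    have hne1 : γ.1 ≠ γ'.1 := fun h => hne (Prod.ext h hc)
    rw [if_neg (dvd_bound_sum m₁ hm₁ γ.1 γ'.1 hb.1.1.1 hb.1.1.2 hb'.1.1.1 hb'.1.1.2 hne1),
      if_neg (dvd_bound_sub m₁ hm₁ γ.1 γ'.1 hb.1.1.1 hb.1.1.2 hb'.1.1.1 hb'.1.1.2 hne1)]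
    norm_num
  · rw [if_neg hc]

lemma norm_eval (hm₁ : 0 < m₁) (hm₂ : 0 < m₂) :
    ∀ γ ∈ GammaSq m₁ m₂,
      innerW m₁ m₂ (chi m₁ m₂ γ) (chi m₁ m₂ γ) =
        if γ.1 = 0 ∨ γ.1 = 2 * (m₁ : ℤ) then 1 else 1 / 2 := by
  intro γ hγ
  rw [innerW_eval m₁ m₂ hm₁ hm₂ γ γ hγ hγ, if_pos rfl, sub_self,
    if_pos (dvd_zero _)]
  have hb := hγ
  simp only [GammaSq, Finset.mem_filter, Finset.mem_product, Finset.mem_Icc,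
    Finset.mem_Ioc] at hb
  by_cases h : γ.1 = 0 ∨ γ.1 = 2 * (m₁ : ℤ)
  · rw [if_pos h, if_pos ?_]
    · norm_num
    · rcases h with h | h <;> rw [h]
      · simp
      · exact ⟨1, by ring⟩
  · rw [if_neg h, if_neg ?_]
    · norm_num
    · push_neg at h
      rintro ⟨c, hc⟩
      have hm : (0:ℤ) < (m₁:ℤ) := by exact_mod_cast hm₁
      have h1 := hb.1.1.1
      have h2 := hb.1.1.2
      have hc0 : 0 ≤ c := by nlinarith
      have hc1 : c ≤ 1 := by nlinarith
      interval_cases c <;> omega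

lemma norm_ne_zero (hm₁ : 0 < m₁) (hm₂ : 0 < m₂) :
    ∀ γ ∈ GammaSq m₁ m₂,
      innerW m₁ m₂ (chi m₁ m₂ γ) (chi m₁ m₂ γ) ≠ 0 := by
  intro γ hγ
  rw [norm_eval m₁ m₂ hm₁ hm₂ γ hγ]
  split_ifs <;> norm_num

lemma lin_ind (hm₁ : 0 < m₁) (hm₂ : 0 < m₂) :
    LinearIndependent ℂ
      (fun γ : ↥(GammaSq m₁ m₂) => fun i : ↥(IdxF m₁ m₂) => chi m₁ m₂ γ.1 i.1) := by
  rw [Fintype.linearIndependent_iff]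
  intro g hg γ'
  have hval : ∀ i ∈ IdxF m₁ m₂,
      (∑ γ : ↥(GammaSq m₁ m₂), g γ * chi m₁ m₂ γ.1 i) = 0 := by
    intro i hi
    have := congrFun hg ⟨i, hi⟩
    simpa [Finset.sum_apply] using this
  have h0 : ∑ γ : ↥(GammaSq m₁ m₂),
      g γ * innerW m₁ m₂ (chi m₁ m₂ γ.1) (chi m₁ m₂ γ'.1) = 0 := by
    have hexp : ∀ γ : ↥(GammaSq m₁ m₂),
        g γ * innerW m₁ m₂ (chi m₁ m₂ γ.1) (chi m₁ m₂ γ'.1)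
          = ∑ i ∈ IdxF m₁ m₂,
              ((wgt m₁ m₂ i : ℂ) * (starRingEnd ℂ) (chi m₁ m₂ γ'.1 i))
                * (g γ * chi m₁ m₂ γ.1 i) := by
      intro γ
      rw [innerW, Finset.mul_sum]
      exact Finset.sum_congr rfl fun i _ => by ring
    rw [Finset.sum_congr rfl (fun γ _ => hexp γ), Finset.sum_comm]
    apply Finset.sum_eq_zero
    intro i hi
    rw [← Finset.mul_sum, hval i hi, mul_zero]
  rw [Finset.sum_eq_single γ'] at h0
  · rcases mul_eq_zero.mp h0 with h | h
    · exact h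
    · exact absurd h (norm_ne_zero m₁ m₂ hm₁ hm₂ γ'.1 γ'.2)
  · intro b _ hb
    rw [ortho m₁ m₂ hm₁ hm₂ b.1 b.2 γ'.1 γ'.2 (fun h => hb (Subtype.ext h)), mul_zero]
  · intro h
    exact absurd (Finset.mem_univ γ') h

lemma span_top (hm₁ : 0 < m₁) (hm₂ : 0 < m₂) :
    Submodule.span ℂ (Set.range
      (fun γ : ↥(GammaSq m₁ m₂) => fun i : ↥(IdxF m₁ m₂) => chi m₁ m₂ γ.1 i.1)) = ⊤ := by
  apply LinearIndependent.span_eq_top_of_card_eq_finrank' (lin_ind m₁ m₂ hm₁ hm₂)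
  rw [Module.finrank_fintype_fun_eq_card, Fintype.card_coe, Fintype.card_coe,
    card_GammaSq m₁ m₂ hm₁ hm₂, card_IdxF m₁ m₂ hm₁ hm₂]

end Derive

end AuxProof

/-- Theorem 5.2: the system `{χ^{(m)}_γ : γ ∈ Γ^{(m)}_□}` is an orthogonal basis of
the `(2m₁+1)m₂`-dimensional space `(L(I^{(m)}), ⟨·,·⟩_w)`, with the stated norms. -/
theorem rectangular_spectral_basis (m₁ m₂ : ℕ) (hm₁ : 0 < m₁) (hm₂ : 0 < m₂) :
    (IdxF m₁ m₂).card = (2 * m₁ + 1) * m₂ ∧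
    LinearIndependent ℂ
      (fun γ : ↥(GammaSq m₁ m₂) => fun i : ↥(IdxF m₁ m₂) => chi m₁ m₂ γ.1 i.1) ∧
    Submodule.span ℂ (Set.range
      (fun γ : ↥(GammaSq m₁ m₂) => fun i : ↥(IdxF m₁ m₂) => chi m₁ m₂ γ.1 i.1)) = ⊤ ∧
    (∀ γ ∈ GammaSq m₁ m₂, ∀ γ' ∈ GammaSq m₁ m₂, γ ≠ γ' →
      innerW m₁ m₂ (chi m₁ m₂ γ) (chi m₁ m₂ γ') = 0) ∧
    (∀ γ ∈ GammaSq m₁ m₂,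
      innerW m₁ m₂ (chi m₁ m₂ γ) (chi m₁ m₂ γ) =
        if γ.1 = 0 ∨ γ.1 = 2 * (m₁ : ℤ) then 1 else 1 / 2) :=
  ⟨card_IdxF m₁ m₂ hm₁ hm₂, lin_ind m₁ m₂ hm₁ hm₂, span_top m₁ m₂ hm₁ hm₂,
    ortho m₁ m₂ hm₁ hm₂, norm_eval m₁ m₂ hm₁ hm₂⟩
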